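/- Let H be a connected k-uniform hypergraph with n vertices and degrees d_1,...,d_n, and let Q_H = D_H + A_H be its signless Laplacian tensor. Then min over circuits gamma in G_{Q_H} of (prod_{i in gamma} 2 d_i)^{1/|gamma|} <= rho(Q_H) <= max over circuits gamma in G_{Q_H} of (prod_{i in gamma} 2 d_i)^{1/|gamma|}. -/

import Mathlib

open scoped BigOperators
open Finset

/-- The arc relation of the digraph `G_A` of an order-`m` dimension-`n` tensor `A`,
    whose entries are indexed by a head index and a tail of `m - 1` indices:
    `(i, j)` is an arc when some entry `a_{i i_2 ... i_m} ≠ 0` has `j` among `i_2, ..., i_m`. -/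
def tArc (m n : ℕ) (A : Fin n → (Fin (m - 1) → Fin n) → ℝ) (i j : Fin n) : Prop :=
  ∃ t : Fin (m - 1) → Fin n, A i t ≠ 0 ∧ j ∈ Set.range t

/-- A digraph (given by its arc relation) is strongly connected. -/
def StronglyConnected {n : ℕ} (arc : Fin n → Fin n → Prop) : Prop :=
  ∀ i j : Fin n, Relation.ReflTransGen arc i j

/-- `γ 0, γ 1, ..., γ p = γ 0` is a circuit (closed directed walk, loops allowed)
    of length `p` in the digraph with arc relation `arc`. -/
def IsCircuit {n : ℕ} (arc : Fin n → Fin n → Prop) (p : ℕ) (γ : ℕ → Fin n) : Prop :=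
  0 < p ∧ γ p = γ 0 ∧ ∀ j < p, arc (γ j) (γ (j + 1))

/-- `lam` is an eigenvalue of the order-`m` dimension-`n` real tensor `A`:
    there is a nonzero complex vector `x` with `A x^{m-1} = lam x^{[m-1]}`. -/
def IsEig (m n : ℕ) (A : Fin n → (Fin (m - 1) → Fin n) → ℝ) (lam : ℂ) : Prop :=
  ∃ x : Fin n → ℂ, x ≠ 0 ∧ ∀ i : Fin n,
    ∑ t : Fin (m - 1) → Fin n, (A i t : ℂ) * ∏ j, x (t j) = lam * x i ^ (m - 1)

/-- The spectral radius of a tensor: the supremum of moduli of its eigenvalues. -/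
noncomputable def specRad (m n : ℕ) (A : Fin n → (Fin (m - 1) → Fin n) → ℝ) : ℝ :=
  sSup {r : ℝ | ∃ lam : ℂ, IsEig m n A lam ∧ ‖lam‖ = r}

/-- The `i`-th slice sum `K_i = ∑_{i_2,...,i_m} a_{i i_2 ... i_m}`. -/
def sliceSum (m n : ℕ) (A : Fin n → (Fin (m - 1) → Fin n) → ℝ) (i : Fin n) : ℝ :=
  ∑ t : Fin (m - 1) → Fin n, A i t

/-- `(A x^{m-1})_i = ∑_{i_2,...,i_m} a_{i i_2 ... i_m} x_{i_2} ⋯ x_{i_m}`. -/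
def Ax (m n : ℕ) (A : Fin n → (Fin (m - 1) → Fin n) → ℝ) (x : Fin n → ℝ) (i : Fin n) : ℝ :=
  ∑ t : Fin (m - 1) → Fin n, A i t * ∏ j, x (t j)

/-- The degree of vertex `i` in the hypergraph with edge set `E`. -/
def deg (n : ℕ) (E : Finset (Finset (Fin n))) (i : Fin n) : ℕ :=
  (E.filter (fun e => i ∈ e)).card

/-- The adjacency tensor of a `k`-uniform hypergraph with edge set `E`:
    entry `1/(k-1)!` when the indices form an edge, `0` otherwise. -/
noncomputable def adjT (k n : ℕ) (E : Finset (Finset (Fin n))) :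
    Fin n → (Fin (k - 1) → Fin n) → ℝ :=
  fun i t =>
    if insert i (Finset.image t Finset.univ) ∈ E then 1 / (Nat.factorial (k - 1) : ℝ) else 0

/-- The signless Laplacian tensor `Q = D + A` of a `k`-uniform hypergraph. -/
noncomputable def qT (k n : ℕ) (E : Finset (Finset (Fin n))) :
    Fin n → (Fin (k - 1) → Fin n) → ℝ :=
  fun i t => (if ∀ j, t j = i then (deg n E i : ℝ) else 0) + adjT k n E i t

/-- The hypergraph with edge set `E` is connected. -/
def HConnected (n : ℕ) (E : Finset (Finset (Fin n))) : Prop :=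
  ∀ i j : Fin n, Relation.ReflTransGen (fun u v => ∃ e ∈ E, u ∈ e ∧ v ∈ e) i j

lemma card_image_eq_fact (q n : ℕ) (s : Finset (Fin n)) (hs : s.card = q) :
    (Finset.univ.filter (fun t : Fin q → Fin n => Finset.image t Finset.univ = s)).card
      = q.factorial := by
  have hcs : Fintype.card s = q := by simp [Fintype.card_coe, hs]
  rw [← Fintype.card_subtype]
  have e : {t : Fin q → Fin n // Finset.image t Finset.univ = s} ≃ (Fin q ≃ s) := by
    refine
      { toFun := fun t => Equiv.ofBijective
          (fun j => (⟨t.1 j, by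
            have h := Finset.mem_image_of_mem t.1 (Finset.mem_univ j)
            rwa [t.2] at h⟩ : s)) ?_
        invFun := fun e => ⟨fun j => (e j : Fin n), ?_⟩
        left_inv := ?_, right_inv := ?_ }
    · rw [Fintype.bijective_iff_surjective_and_card]
      constructor
      · rintro ⟨v, hv⟩
        rw [← t.2] at hv
        obtain ⟨j, -, hj⟩ := Finset.mem_image.mp hv
        exact ⟨j, Subtype.ext hj⟩
      · simp [hcs]
    · ext v
      simp only [Finset.mem_image, Finset.mem_univ, true_and]
      constructor
      · rintro ⟨j, rfl⟩; exact (e j).2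
      · intro hv; exact ⟨e.symm ⟨v, hv⟩, by simp⟩
    · intro t; rfl
    · intro e; ext j; rfl
  rw [Fintype.card_congr e]
  have := Fintype.card_equiv (α := Fin q) (β := s)
    (Fintype.equivOfCardEq (by simp [hcs]))
  simpa [hcs] using this

lemma insert_image_eq_iff (k n : ℕ) (hk : 2 ≤ k) (i : Fin n) (e : Finset (Fin n))
    (he : e.card = k) (hie : i ∈ e) (t : Fin (k-1) → Fin n) :
    insert i (Finset.image t Finset.univ) = e ↔ Finset.image t Finset.univ = e.erase i := by
  constructor
  · intro h
    have him : Finset.image t Finset.univ ⊆ e := by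
      rw [← h]; exact Finset.subset_insert _ _
    have hcard : (Finset.image t Finset.univ).card ≤ k - 1 := by
      refine le_trans (Finset.card_image_le) ?_
      simp
    have hinot : i ∉ Finset.image t Finset.univ := by
      intro hi
      have : insert i (Finset.image t Finset.univ) = Finset.image t Finset.univ :=
        Finset.insert_eq_self.mpr hi
      rw [this] at h
      rw [h] at hcard
      omega
    refine Finset.Subset.antisymm (Finset.subset_erase.mpr ⟨him, hinot⟩) ?_
    intro v hv
    rw [Finset.mem_erase] at hv
    have : v ∈ insert i (Finset.image t Finset.univ) := h ▸ hv.2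
    rcases Finset.mem_insert.mp this with h' | h'
    · exact absurd h' hv.1
    · exact h'
  · intro h
    rw [h, Finset.insert_erase hie]

lemma adj_sliceSum (k n : ℕ) (hk : 2 ≤ k) (E : Finset (Finset (Fin n)))
    (hunif : ∀ e ∈ E, e.card = k) (i : Fin n) :
    sliceSum k n (adjT k n E) i = deg n E i := by
  unfold sliceSum adjT
  rw [← Finset.sum_filter]
  rw [Finset.sum_const]
  have hcard : (Finset.univ.filter
      (fun t : Fin (k-1) → Fin n => insert i (Finset.image t Finset.univ) ∈ E)).card
      = deg n E i * (k-1).factorial := by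
    rw [Finset.card_eq_sum_card_fiberwise
      (f := fun t : Fin (k-1) → Fin n => insert i (Finset.image t Finset.univ))
      (t := E.filter (fun e => i ∈ e))
      (fun t ht => by
        rw [Finset.mem_coe, Finset.mem_filter] at ht ⊢
        exact ⟨ht.2, Finset.mem_insert_self _ _⟩)]
    rw [deg, Finset.sum_congr rfl (fun e he => ?_), Finset.sum_const, smul_eq_mul]
    rw [Finset.mem_filter] at he
    rw [Finset.filter_filter]
    have : ∀ t : Fin (k-1) → Fin n,
        ((insert i (Finset.image t Finset.univ) ∈ E ∧ insert i (Finset.image t Finset.univ) = e)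
          ↔ Finset.image t Finset.univ = e.erase i) := by
      intro t
      rw [← insert_image_eq_iff k n hk i e (hunif e he.1) he.2 t]
      exact ⟨fun h => h.2, fun h => ⟨h ▸ he.1, h⟩⟩
    rw [Finset.filter_congr (fun t _ => this t)]
    exact card_image_eq_fact (k-1) n (e.erase i)
      (by rw [Finset.card_erase_of_mem he.2, hunif e he.1])
  rw [hcard, nsmul_eq_mul]
  push_cast
  rw [mul_one_div, mul_div_assoc, div_self (by positivity : ((k-1).factorial : ℝ) ≠ 0), mul_one]

-- L2: every eigenvalue has modulus at most some slice sum
lemma eig_abs_le (k n : ℕ) (hn : 0 < n) (A : Fin n → (Fin (k-1) → Fin n) → ℝ)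
    (hA : ∀ i t, 0 ≤ A i t) (lam : ℂ) (h : IsEig k n A lam) :
    ∃ i : Fin n, ‖lam‖ ≤ sliceSum k n A i := by
  obtain ⟨x, hx0, hx⟩ := h
  have : Nonempty (Fin n) := ⟨⟨0, hn⟩⟩
  obtain ⟨i, -, hi⟩ := Finset.exists_max_image Finset.univ (fun i => ‖x i‖)
    ⟨Classical.arbitrary (Fin n), Finset.mem_univ _⟩
  set M := ‖x i‖ with hM
  have hMpos : 0 < M := by
    obtain ⟨j, hj⟩ := Function.ne_iff.mp hx0
    exact lt_of_lt_of_le (by simpa using hj : 0 < ‖x j‖) (hi j (Finset.mem_univ _))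
  refine ⟨i, ?_⟩
  have key : ‖lam‖ * M ^ (k-1) ≤ sliceSum k n A i * M ^ (k-1) := by
    have h1 : ‖lam‖ * M ^ (k-1) = ‖(∑ t : Fin (k-1) → Fin n, (A i t : ℂ) * ∏ j, x (t j))‖ := by
      rw [hx i, norm_mul, norm_pow]
    rw [h1]
    refine le_trans (norm_sum_le _ _) ?_
    rw [sliceSum, Finset.sum_mul]
    refine Finset.sum_le_sum fun t _ => ?_
    rw [norm_mul, Complex.norm_real, norm_prod, Real.norm_of_nonneg (hA i t)]
    refine mul_le_mul_of_nonneg_left ?_ (hA i t)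
    calc ∏ j, ‖x (t j)‖ ≤ ∏ _j : Fin (k-1), M :=
          Finset.prod_le_prod (fun _ _ => norm_nonneg _)
            (fun j _ => hi (t j) (Finset.mem_univ _))
      _ = M ^ (k-1) := by rw [Finset.prod_const, Finset.card_univ, Fintype.card_fin]
  exact le_of_mul_le_mul_right key (pow_pos hMpos _)

section Helpers
variable (k n : ℕ) (B : Fin n → (Fin (k-1) → Fin n) → ℝ)

lemma Ax_div (y : Fin n → ℝ) (c : ℝ) (i : Fin n) :
    Ax k n B (fun j => y j / c) i = Ax k n B y i / c ^ (k-1) := by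
  unfold Ax
  rw [Finset.sum_div]
  refine Finset.sum_congr rfl fun t _ => ?_
  rw [Finset.prod_div_distrib, Finset.prod_const, Finset.card_univ, Fintype.card_fin,
    mul_div_assoc]

lemma Ax_mono (hB : ∀ i t, 0 ≤ B i t) (x y : Fin n → ℝ) (hx : ∀ j, 0 ≤ x j)
    (hxy : ∀ j, x j ≤ y j) (i : Fin n) : Ax k n B x i ≤ Ax k n B y i := by
  refine Finset.sum_le_sum fun t _ => ?_
  exact mul_le_mul_of_nonneg_left
    (Finset.prod_le_prod (fun j _ => hx (t j)) (fun j _ => hxy (t j))) (hB i t)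

lemma Ax_nonneg (hB : ∀ i t, 0 ≤ B i t) (x : Fin n → ℝ) (hx : ∀ j, 0 ≤ x j) (i : Fin n) :
    0 ≤ Ax k n B x i :=
  Finset.sum_nonneg fun t _ => mul_nonneg (hB i t) (Finset.prod_nonneg fun j _ => hx (t j))

lemma Ax_le_sliceSum (hB : ∀ i t, 0 ≤ B i t) (x : Fin n → ℝ) (hx0 : ∀ j, 0 ≤ x j)
    (hx1 : ∀ j, x j ≤ 1) (i : Fin n) : Ax k n B x i ≤ sliceSum k n B i := by
  refine Finset.sum_le_sum fun t _ => ?_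
  nth_rewrite 2 [← mul_one (B i t)]
  exact mul_le_mul_of_nonneg_left
    (Finset.prod_le_one (fun j _ => hx0 (t j)) (fun j _ => hx1 (t j))) (hB i t)

lemma Ax_const (c : ℝ) (i : Fin n) :
    Ax k n B (fun _ => c) i = sliceSum k n B i * c ^ (k-1) := by
  unfold Ax sliceSum
  rw [Finset.sum_mul]
  refine Finset.sum_congr rfl fun t _ => ?_
  rw [Finset.prod_const, Finset.card_univ, Fintype.card_fin]

lemma feas_lam_le (hn : 0 < n) (hB : ∀ i t, 0 ≤ B i t) (lam : ℝ) (x : Fin n → ℝ)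
    (hlam : 0 ≤ lam) (hx0 : ∀ j, 0 ≤ x j) (hx1 : ∀ j, x j ≤ 1) (hsum : ∑ j, x j = 1)
    (hfeas : ∀ i, lam * x i ^ (k-1) ≤ Ax k n B x i) :
    lam ≤ (n:ℝ) ^ (k-1) * ∑ i, sliceSum k n B i := by
  have : Nonempty (Fin n) := ⟨⟨0, hn⟩⟩
  -- some coordinate is at least 1/n
  obtain ⟨i0, hi0⟩ : ∃ i0 : Fin n, (n:ℝ)⁻¹ ≤ x i0 := by
    by_contra hcon
    push_neg at hcon
    have := Finset.sum_lt_sum_of_nonempty (Finset.univ_nonempty) (fun i _ => hcon i) (f := x)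
    rw [hsum, Finset.sum_const, Finset.card_univ, Fintype.card_fin, nsmul_eq_mul,
      mul_inv_cancel₀ (by positivity : (n:ℝ) ≠ 0)] at this
    exact lt_irrefl _ this
  have h1 : lam * ((n:ℝ)⁻¹) ^ (k-1) ≤ ∑ i, sliceSum k n B i := by
    calc lam * ((n:ℝ)⁻¹) ^ (k-1) ≤ lam * x i0 ^ (k-1) := by
          refine mul_le_mul_of_nonneg_left (pow_le_pow_left₀ (by positivity) hi0 _) hlam
      _ ≤ Ax k n B x i0 := hfeas i0
      _ ≤ sliceSum k n B i0 := Ax_le_sliceSum k n B hB x hx0 hx1 i0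
      _ ≤ ∑ i, sliceSum k n B i := Finset.single_le_sum
          (fun i _ => Finset.sum_nonneg fun t _ => hB i t) (Finset.mem_univ i0)
  have hnpos : (0:ℝ) < (n:ℝ) ^ (k-1) := by positivity
  calc lam = lam * ((n:ℝ)⁻¹) ^ (k-1) * (n:ℝ) ^ (k-1) := by
        rw [mul_assoc, ← mul_pow, inv_mul_cancel₀ (by positivity : (n:ℝ) ≠ 0), one_pow, mul_one]
    _ ≤ (∑ i, sliceSum k n B i) * (n:ℝ) ^ (k-1) := by
        exact mul_le_mul_of_nonneg_right h1 hnpos.le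
    _ = (n:ℝ) ^ (k-1) * ∑ i, sliceSum k n B i := mul_comm _ _

end Helpers

lemma exists_eigpair_pos (k n : ℕ) (hk : 2 ≤ k) (hn : 0 < n)
    (B : Fin n → (Fin (k-1) → Fin n) → ℝ) (hB : ∀ i t, 0 < B i t)
    (lam0 : ℝ) (hlam0 : 0 ≤ lam0) (hlam0le : ∀ i, lam0 ≤ sliceSum k n B i) :
    ∃ (lam : ℝ) (x : Fin n → ℝ), lam0 ≤ lam ∧ (∀ i, 0 ≤ x i) ∧ (∀ i, x i ≤ 1) ∧
      (∑ i, x i = 1) ∧ ∀ i, Ax k n B x i = lam * x i ^ (k-1) := by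
  have : Nonempty (Fin n) := ⟨⟨0, hn⟩⟩
  have hq : k - 1 ≠ 0 := by omega
  have hB' : ∀ i t, 0 ≤ B i t := fun i t => (hB i t).le
  set C : ℝ := (n:ℝ) ^ (k-1) * ∑ i, sliceSum k n B i with hC
  set SS : Set (ℝ × (Fin n → ℝ)) := {p | (0 ≤ p.1 ∧ p.1 ≤ C) ∧ (∀ i, 0 ≤ p.2 i) ∧
    (∀ i, p.2 i ≤ 1) ∧ (∑ i, p.2 i = 1) ∧ ∀ i, p.1 * p.2 i ^ (k-1) ≤ Ax k n B p.2 i}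
    with hSS
  -- the uniform vector
  set u : Fin n → ℝ := fun _ => (n:ℝ)⁻¹ with hu
  have hnR : (0:ℝ) < n := by exact_mod_cast hn
  have hu0 : ∀ j, 0 ≤ u j := fun _ => by positivity
  have hu1 : ∀ j, u j ≤ 1 := fun _ => by
    simp only [hu]
    rw [inv_le_one_iff₀]; right; exact_mod_cast hn
  have husum : ∑ j, u j = 1 := by
    simp only [hu]
    rw [Finset.sum_const, Finset.card_univ, Fintype.card_fin, nsmul_eq_mul,
      mul_inv_cancel₀ (by positivity)]
  have hufeas : ∀ i, lam0 * u i ^ (k-1) ≤ Ax k n B u i := by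
    intro i
    rw [hu, Ax_const]
    exact mul_le_mul_of_nonneg_right (hlam0le i) (by positivity)
  have hp0 : (lam0, u) ∈ SS := by
    refine ⟨⟨hlam0, feas_lam_le k n B hn hB' lam0 u hlam0 hu0 hu1 husum hufeas⟩,
      hu0, hu1, husum, hufeas⟩
  -- compactness
  have hKcomp : IsCompact (Set.Icc (0:ℝ) C ×ˢ Set.Icc (0 : Fin n → ℝ) 1) :=
    isCompact_Icc.prod isCompact_Icc
  have hsub : SS ⊆ Set.Icc (0:ℝ) C ×ˢ Set.Icc (0 : Fin n → ℝ) 1 := by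
    rintro ⟨lam, x⟩ ⟨⟨h1, h2⟩, h3, h4, -, -⟩
    exact ⟨⟨h1, h2⟩, fun i => h3 i, fun i => h4 i⟩
  have hAxcont : ∀ i : Fin n, Continuous (fun p : ℝ × (Fin n → ℝ) => Ax k n B p.2 i) := by
    intro i
    unfold Ax
    fun_prop
  have hclosed : IsClosed SS := by
    rw [hSS]
    have e1 : IsClosed {p : ℝ × (Fin n → ℝ) | 0 ≤ p.1} := isClosed_le (by fun_prop) (by fun_prop)
    have e2 : IsClosed {p : ℝ × (Fin n → ℝ) | p.1 ≤ C} := isClosed_le (by fun_prop) (by fun_prop)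
    have e3 : IsClosed {p : ℝ × (Fin n → ℝ) | ∀ i, 0 ≤ p.2 i} := by
      have : {p : ℝ × (Fin n → ℝ) | ∀ i, 0 ≤ p.2 i} = ⋂ i, {p | 0 ≤ p.2 i} := by
        ext p; simp
      rw [this]
      exact isClosed_iInter fun i => isClosed_le (by fun_prop) (by fun_prop)
    have e4 : IsClosed {p : ℝ × (Fin n → ℝ) | ∀ i, p.2 i ≤ 1} := by
      have : {p : ℝ × (Fin n → ℝ) | ∀ i, p.2 i ≤ 1} = ⋂ i, {p | p.2 i ≤ 1} := by
        ext p; simp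
      rw [this]
      exact isClosed_iInter fun i => isClosed_le (by fun_prop) (by fun_prop)
    have e5 : IsClosed {p : ℝ × (Fin n → ℝ) | ∑ i, p.2 i = 1} :=
      isClosed_eq (by fun_prop) (by fun_prop)
    have e6 : IsClosed {p : ℝ × (Fin n → ℝ) | ∀ i, p.1 * p.2 i ^ (k-1) ≤ Ax k n B p.2 i} := by
      have : {p : ℝ × (Fin n → ℝ) | ∀ i, p.1 * p.2 i ^ (k-1) ≤ Ax k n B p.2 i}
          = ⋂ i, {p | p.1 * p.2 i ^ (k-1) ≤ Ax k n B p.2 i} := by ext p; simp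
      rw [this]
      exact isClosed_iInter fun i => isClosed_le (by fun_prop) (hAxcont i)
    have : {p : ℝ × (Fin n → ℝ) | (0 ≤ p.1 ∧ p.1 ≤ C) ∧ (∀ i, 0 ≤ p.2 i) ∧
        (∀ i, p.2 i ≤ 1) ∧ (∑ i, p.2 i = 1) ∧ ∀ i, p.1 * p.2 i ^ (k-1) ≤ Ax k n B p.2 i}
        = ({p : ℝ × (Fin n → ℝ) | 0 ≤ p.1} ∩ {p | p.1 ≤ C}) ∩ ({p | ∀ i, 0 ≤ p.2 i}
          ∩ ({p | ∀ i, p.2 i ≤ 1} ∩ ({p | ∑ i, p.2 i = 1}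
            ∩ {p | ∀ i, p.1 * p.2 i ^ (k-1) ≤ Ax k n B p.2 i}))) := by
      rfl
    rw [this]
    exact ((e1.inter e2).inter (e3.inter (e4.inter (e5.inter e6))))
  have hcomp : IsCompact SS := hKcomp.of_isClosed_subset hclosed hsub
  obtain ⟨⟨lam, x⟩, hpSS, hmax⟩ := hcomp.exists_isMaxOn ⟨_, hp0⟩
    (continuous_fst.continuousOn)
  obtain ⟨⟨hlamnn, hlamC⟩, hx0, hx1, hxsum, hfeas⟩ := hpSS
  have hlam0lam : lam0 ≤ lam := hmax hp0
  refine ⟨lam, x, hlam0lam, hx0, hx1, hxsum, ?_⟩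
  -- show the equality holds at every index
  by_contra hcon
  push_neg at hcon
  obtain ⟨i0, hi0ne⟩ := hcon
  have hi0lt : lam * x i0 ^ (k-1) < Ax k n B x i0 :=
    lt_of_le_of_ne (hfeas i0) (fun h => hi0ne h.symm)
  -- the minimal "diagonal-column" entry
  set b : ℝ := Finset.univ.inf' Finset.univ_nonempty (fun i => B i (fun _ => i0)) with hb
  have hbpos : 0 < b := by
    rw [hb]
    exact (Finset.lt_inf'_iff _).mpr fun i _ => hB i _
  have hble : ∀ i, b ≤ B i (fun _ => i0) := fun i =>
    Finset.inf'_le _ (Finset.mem_univ i)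
  -- choose δ > 0 small
  set f : ℝ → ℝ := fun δ => (lam + b * δ ^ (k-1)) * (x i0 + δ) ^ (k-1) with hf
  have hf0 : f 0 < Ax k n B x i0 := by
    rw [hf]
    simp only [zero_pow hq, mul_zero, add_zero]
    exact hi0lt
  have hfc : ContinuousAt f 0 := by fun_prop
  obtain ⟨δ, hδmem, hδpos⟩ :
      ∃ δ, f δ < Ax k n B x i0 ∧ δ ∈ Set.Ioi (0:ℝ) := by
    have h1 : {δ | f δ < Ax k n B x i0} ∈ nhds (0:ℝ) :=
      hfc.preimage_mem_nhds (Iio_mem_nhds hf0)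
    have h2 : {δ | f δ < Ax k n B x i0} ∩ Set.Ioi 0 ∈ nhdsWithin (0:ℝ) (Set.Ioi 0) :=
      Filter.inter_mem (nhdsWithin_le_nhds h1) self_mem_nhdsWithin
    obtain ⟨δ, hδ⟩ := Filter.nonempty_of_mem h2
    exact ⟨δ, hδ.1, hδ.2⟩
  rw [Set.mem_Ioi] at hδpos
  set μ : ℝ := b * δ ^ (k-1) with hμ
  have hμpos : 0 < μ := by positivity
  set y : Fin n → ℝ := fun j => x j + if j = i0 then δ else 0 with hy
  have hyx : ∀ j, x j ≤ y j := fun j => by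
    rw [hy]; simp only []
    split <;> linarith
  have hy0 : ∀ j, 0 ≤ y j := fun j => le_trans (hx0 j) (hyx j)
  have hyi0 : y i0 = x i0 + δ := by rw [hy]; simp
  -- key inequality for y
  have hkey : ∀ i, (lam + μ) * y i ^ (k-1) ≤ Ax k n B y i := by
    intro i
    by_cases hii : i = i0
    · subst hii
      rw [hyi0]
      calc (lam + μ) * (x i + δ) ^ (k-1) = f δ := by rw [hf, hμ]
        _ ≤ Ax k n B x i := hδmem.le
        _ ≤ Ax k n B y i := Ax_mono k n B hB' x y hx0 hyx i
    · have hyi : y i = x i := by rw [hy]; simp [hii]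
      have hstep : Ax k n B x i + B i (fun _ => i0) * ((x i0 + δ) ^ (k-1) - x i0 ^ (k-1))
          ≤ Ax k n B y i := by
        have hterm : ∀ t : Fin (k-1) → Fin n,
            B i t * ∏ j, x (t j) + (if t = (fun _ => i0) then
              B i t * ((x i0 + δ) ^ (k-1) - x i0 ^ (k-1)) else 0) ≤ B i t * ∏ j, y (t j) := by
          intro t
          by_cases ht : t = (fun _ => i0)
          · subst ht
            rw [if_pos rfl]
            have hpx : ∏ j : Fin (k-1), x i0 = x i0 ^ (k-1) := by
              rw [Finset.prod_const, Finset.card_univ, Fintype.card_fin]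
            have hpy : ∏ j : Fin (k-1), y i0 = (x i0 + δ) ^ (k-1) := by
              rw [Finset.prod_const, Finset.card_univ, Fintype.card_fin, hyi0]
            rw [hpx, hpy]
            exact le_of_eq (by ring)
          · rw [if_neg ht, add_zero]
            exact mul_le_mul_of_nonneg_left
              (Finset.prod_le_prod (fun j _ => hx0 (t j)) (fun j _ => hyx (t j))) (hB' i t)
        calc Ax k n B x i + B i (fun _ => i0) * ((x i0 + δ) ^ (k-1) - x i0 ^ (k-1))
            = ∑ t : Fin (k-1) → Fin n, (B i t * ∏ j, x (t j) + (if t = (fun _ => i0) then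
              B i t * ((x i0 + δ) ^ (k-1) - x i0 ^ (k-1)) else 0)) := by
              rw [Finset.sum_add_distrib, Finset.sum_ite_eq' Finset.univ
                ((fun _ => i0) : Fin (k-1) → Fin n)]
              simp [Ax]
          _ ≤ ∑ t : Fin (k-1) → Fin n, B i t * ∏ j, y (t j) :=
              Finset.sum_le_sum fun t _ => hterm t
          _ = Ax k n B y i := rfl
      have hpow : δ ^ (k-1) ≤ (x i0 + δ) ^ (k-1) - x i0 ^ (k-1) := by
        have := pow_add_pow_le (hx0 i0) hδpos.le hq
        linarith
      have hxi1 : x i ^ (k-1) ≤ 1 := pow_le_one₀ (hx0 i) (hx1 i)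
      have hbB : b * δ ^ (k-1) ≤ B i (fun _ => i0) * ((x i0 + δ) ^ (k-1) - x i0 ^ (k-1)) :=
        mul_le_mul (hble i) hpow (by positivity) (hB' i _)
      calc (lam + μ) * y i ^ (k-1) = lam * x i ^ (k-1) + μ * x i ^ (k-1) := by
            rw [hyi]; ring
        _ ≤ Ax k n B x i + μ := by
            have h1 := hfeas i
            have h2 : μ * x i ^ (k-1) ≤ μ := by
              nth_rewrite 2 [← mul_one μ]
              exact mul_le_mul_of_nonneg_left hxi1 hμpos.le
            linarith
        _ ≤ Ax k n B x i + B i (fun _ => i0) * ((x i0 + δ) ^ (k-1) - x i0 ^ (k-1)) := by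
            rw [hμ] at *; linarith
        _ ≤ Ax k n B y i := hstep
  -- normalize y
  set c : ℝ := 1 + δ with hc
  have hcpos : (0:ℝ) < c := by rw [hc]; linarith
  set z : Fin n → ℝ := fun j => y j / c with hz
  have hz0 : ∀ j, 0 ≤ z j := fun j => div_nonneg (hy0 j) hcpos.le
  have hysum : ∑ j, y j = c := by
    rw [hy, hc, Finset.sum_add_distrib, hxsum, Finset.sum_ite_eq' Finset.univ i0 (fun _ => δ)]
    simp
  have hzsum : ∑ j, z j = 1 := by
    rw [hz]
    simp only []
    rw [← Finset.sum_div, hysum, div_self hcpos.ne']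
  have hz1 : ∀ j, z j ≤ 1 := by
    intro j
    rw [hz]
    simp only []
    rw [div_le_one hcpos]
    calc y j ≤ ∑ j', y j' := Finset.single_le_sum (fun j' _ => hy0 j') (Finset.mem_univ j)
      _ = c := hysum
  have hzfeas : ∀ i, (lam + μ) * z i ^ (k-1) ≤ Ax k n B z i := by
    intro i
    rw [hz]
    simp only []
    rw [Ax_div, div_pow, ← mul_div_assoc, div_le_div_iff_of_pos_right (by positivity)]
    exact hkey i
  have hzmem : (lam + μ, z) ∈ SS := by
    refine ⟨⟨by positivity, ?_⟩, hz0, hz1, hzsum, hzfeas⟩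
    exact feas_lam_le k n B hn hB' (lam + μ) z (by positivity) hz0 hz1 hzsum hzfeas
  have := hmax hzmem
  simp only [Set.mem_setOf_eq] at this
  have : lam + μ ≤ lam := this
  linarith

lemma exists_eigpair_nonneg (k n : ℕ) (hk : 2 ≤ k) (hn : 0 < n)
    (A : Fin n → (Fin (k-1) → Fin n) → ℝ) (hA : ∀ i t, 0 ≤ A i t)
    (lam0 : ℝ) (hlam0 : 0 ≤ lam0) (hlam0le : ∀ i, lam0 ≤ sliceSum k n A i) :
    ∃ (lam : ℝ) (x : Fin n → ℝ), lam0 ≤ lam ∧ (∀ i, 0 ≤ x i) ∧ (∑ i, x i = 1) ∧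
      ∀ i, Ax k n A x i = lam * x i ^ (k-1) := by
  have hq : k - 1 ≠ 0 := by omega
  set ε : ℕ → ℝ := fun m => 1 / (m + 1) with hε
  have hεpos : ∀ m, 0 < ε m := fun m => by positivity
  have hεle1 : ∀ m, ε m ≤ 1 := fun m => by
    rw [hε]
    simp only []
    rw [div_le_one (by positivity)]
    have : (0:ℝ) ≤ m := Nat.cast_nonneg m
    linarith
  set B : ℕ → Fin n → (Fin (k-1) → Fin n) → ℝ := fun m i t => A i t + ε m with hB
  have hBpos : ∀ m i t, 0 < B m i t := fun m i t => by
    have := hA i t; have := hεpos m; rw [hB]; dsimp; linarith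
  have hsliceB : ∀ m i, sliceSum k n A i ≤ sliceSum k n (B m) i := by
    intro m i
    refine Finset.sum_le_sum fun t _ => ?_
    have := (hεpos m).le; rw [hB]; dsimp; linarith
  have hBle : ∀ m i t, B m i t ≤ B 0 i t := by
    intro m i t
    rw [hB]; dsimp
    have h1 : ε m ≤ ε 0 := by
      rw [hε]; dsimp
      rw [div_le_div_iff₀ (by positivity) (by positivity)]
      have : (0:ℝ) ≤ m := Nat.cast_nonneg m
      push_cast; linarith
    linarith
  -- eigenpairs for the perturbed tensors
  have hex : ∀ m, ∃ (lam : ℝ) (x : Fin n → ℝ), lam0 ≤ lam ∧ (∀ i, 0 ≤ x i) ∧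
      (∀ i, x i ≤ 1) ∧ (∑ i, x i = 1) ∧ ∀ i, Ax k n (B m) x i = lam * x i ^ (k-1) :=
    fun m => exists_eigpair_pos k n hk hn (B m) (hBpos m) lam0 hlam0
      (fun i => le_trans (hlam0le i) (hsliceB m i))
  choose lamSeq xSeq hlamSeq hx0Seq hx1Seq hsumSeq heigSeq using hex
  set C1 : ℝ := (n:ℝ) ^ (k-1) * ∑ i, sliceSum k n (B 0) i with hC1
  have hlamle : ∀ m, lamSeq m ≤ C1 := by
    intro m
    refine feas_lam_le k n (B 0) hn (fun i t => (hBpos 0 i t).le) (lamSeq m) (xSeq m)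
      (le_trans hlam0 (hlamSeq m)) (hx0Seq m) (hx1Seq m) (hsumSeq m) ?_
    intro i
    rw [← heigSeq m i]
    refine Finset.sum_le_sum fun t _ => ?_
    exact mul_le_mul_of_nonneg_right (hBle m i t)
      (Finset.prod_nonneg fun j _ => hx0Seq m (t j))
  -- compactness and subsequence
  set u : ℕ → ℝ × (Fin n → ℝ) := fun m => (lamSeq m, xSeq m) with hudef
  have humem : ∀ m, u m ∈ Set.Icc (0:ℝ) C1 ×ˢ Set.Icc (0 : Fin n → ℝ) 1 := by
    intro m
    exact ⟨⟨le_trans hlam0 (hlamSeq m), hlamle m⟩, fun i => hx0Seq m i, fun i => hx1Seq m i⟩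
  obtain ⟨⟨lam, x⟩, hmem, φ, hφ, hconv⟩ :=
    (isCompact_Icc.prod isCompact_Icc).tendsto_subseq humem
  have htl : Filter.Tendsto (fun m => lamSeq (φ m)) Filter.atTop (nhds lam) :=
    (continuous_fst.tendsto (lam, x)).comp hconv
  have htxfun : Filter.Tendsto (fun m => xSeq (φ m)) Filter.atTop (nhds x) :=
    (continuous_snd.tendsto (lam, x)).comp hconv
  have htx : ∀ i, Filter.Tendsto (fun m => xSeq (φ m) i) Filter.atTop (nhds (x i)) :=
    fun i => ((continuous_apply i).tendsto x).comp htxfun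
  have hx0 : ∀ i, 0 ≤ x i := fun i => hmem.2.1 i
  have hsum : ∑ i, x i = 1 := by
    have h1 : Filter.Tendsto (fun m => ∑ i, xSeq (φ m) i) Filter.atTop (nhds (∑ i, x i)) :=
      tendsto_finset_sum _ (fun i _ => htx i)
    have h2 : (fun m => ∑ i, xSeq (φ m) i) = fun _ => (1:ℝ) := funext fun m => hsumSeq (φ m)
    rw [h2] at h1
    exact (tendsto_nhds_unique tendsto_const_nhds h1).symm
  have hlamge : lam0 ≤ lam := ge_of_tendsto htl (Filter.Eventually.of_forall fun m => hlamSeq (φ m))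
  refine ⟨lam, x, hlamge, hx0, hsum, ?_⟩
  intro i
  -- pass the eigen-equation to the limit
  have hεt : Filter.Tendsto (fun m => ε (φ m)) Filter.atTop (nhds 0) := by
    have h1 : Filter.Tendsto ε Filter.atTop (nhds 0) := by
      rw [hε]
      exact tendsto_one_div_add_atTop_nhds_zero_nat
    exact h1.comp hφ.tendsto_atTop
  have hScont : Continuous (fun v : Fin n → ℝ => ∑ t : Fin (k-1) → Fin n, ∏ j, v (t j)) := by
    fun_prop
  have hAxcont : Continuous (fun v : Fin n → ℝ => Ax k n A v i) := by
    unfold Ax; fun_prop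
  have hsplit : ∀ m (v : Fin n → ℝ), Ax k n (B m) v i
      = Ax k n A v i + ε m * ∑ t : Fin (k-1) → Fin n, ∏ j, v (t j) := by
    intro m v
    unfold Ax
    rw [Finset.mul_sum, ← Finset.sum_add_distrib]
    refine Finset.sum_congr rfl fun t _ => ?_
    rw [hB]; dsimp; ring
  have hLHS : Filter.Tendsto (fun m => Ax k n (B (φ m)) (xSeq (φ m)) i) Filter.atTop
      (nhds (Ax k n A x i)) := by
    have h1 : Filter.Tendsto (fun m => Ax k n A (xSeq (φ m)) i) Filter.atTop
        (nhds (Ax k n A x i)) := (hAxcont.tendsto x).comp htxfun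
    have h2 : Filter.Tendsto
        (fun m => ε (φ m) * ∑ t : Fin (k-1) → Fin n, ∏ j, xSeq (φ m) (t j)) Filter.atTop
        (nhds (0 * ∑ t : Fin (k-1) → Fin n, ∏ j, x (t j))) :=
      hεt.mul ((hScont.tendsto x).comp htxfun)
    rw [zero_mul] at h2
    have h3 := h1.add h2
    rw [add_zero] at h3
    refine h3.congr fun m => ?_
    rw [hsplit]
  have hRHS : Filter.Tendsto (fun m => Ax k n (B (φ m)) (xSeq (φ m)) i) Filter.atTop
      (nhds (lam * x i ^ (k-1))) := by
    have h1 : Filter.Tendsto (fun m => lamSeq (φ m) * xSeq (φ m) i ^ (k-1)) Filter.atTop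
        (nhds (lam * x i ^ (k-1))) := htl.mul ((htx i).pow _)
    refine h1.congr fun m => ?_
    rw [← heigSeq (φ m) i]
  exact tendsto_nhds_unique hLHS hRHS

lemma adjT_nonneg (k n : ℕ) (E : Finset (Finset (Fin n))) (i : Fin n)
    (t : Fin (k-1) → Fin n) : 0 ≤ adjT k n E i t := by
  unfold adjT; split <;> positivity

lemma qT_nonneg (k n : ℕ) (E : Finset (Finset (Fin n))) (i : Fin n)
    (t : Fin (k-1) → Fin n) : 0 ≤ qT k n E i t := by
  unfold qT
  refine add_nonneg ?_ (adjT_nonneg k n E i t)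
  split <;> positivity

lemma qT_sliceSum (k n : ℕ) (hk : 2 ≤ k) (E : Finset (Finset (Fin n)))
    (hunif : ∀ e ∈ E, e.card = k) (i : Fin n) :
    sliceSum k n (qT k n E) i = 2 * deg n E i := by
  unfold sliceSum qT
  rw [Finset.sum_add_distrib]
  have hdiag : (∑ t : Fin (k-1) → Fin n, if ∀ j, t j = i then (deg n E i : ℝ) else 0)
      = deg n E i := by
    have hiff : ∀ t : Fin (k-1) → Fin n, (∀ j, t j = i) = (t = fun _ => i) :=
      fun t => propext ⟨fun h => funext h, fun h j => congrFun h j⟩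
    simp only [hiff]
    rw [Finset.sum_ite_eq' Finset.univ ((fun _ => i) : Fin (k-1) → Fin n)
      (fun _ => (deg n E i : ℝ))]
    simp
  have hadj := adj_sliceSum k n hk E hunif i
  unfold sliceSum at hadj
  rw [hdiag, hadj]
  ring

lemma qT_loop (k n : ℕ) (hk : 2 ≤ k) (E : Finset (Finset (Fin n))) (i : Fin n)
    (hd : 0 < deg n E i) : tArc k n (qT k n E) i i := by
  refine ⟨fun _ => i, ?_, ⟨⟨0, by omega⟩, rfl⟩⟩
  have h1 : (0:ℝ) < deg n E i := by exact_mod_cast hd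
  have h2 : (0:ℝ) < qT k n E i (fun _ => i) := by
    unfold qT
    have h3 : (if ∀ j : Fin (k-1), (fun _ => i) j = i then (deg n E i : ℝ) else 0)
        = (deg n E i : ℝ) := if_pos (fun _ => rfl)
    rw [h3]
    have := adjT_nonneg k n E i (fun _ => i)
    linarith
  exact h2.ne'

lemma real_eig (k n : ℕ) (hn : 0 < n) (A : Fin n → (Fin (k-1) → Fin n) → ℝ)
    (lam : ℝ) (x : Fin n → ℝ) (hsum : ∑ i, x i = 1)
    (heig : ∀ i, Ax k n A x i = lam * x i ^ (k-1)) : IsEig k n A (lam : ℂ) := by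
  refine ⟨fun i => ((x i : ℝ) : ℂ), ?_, ?_⟩
  · intro h
    have : ∀ i, x i = 0 := by
      intro i
      have := congrFun h i
      simpa using this
    rw [Finset.sum_congr rfl (fun i _ => this i)] at hsum
    simp at hsum
  · intro i
    have h := heig i
    unfold Ax at h
    have h2 : ((∑ t : Fin (k-1) → Fin n, A i t * ∏ j, x (t j) : ℝ) : ℂ)
        = ((lam * x i ^ (k-1) : ℝ) : ℂ) := by exact_mod_cast h
    push_cast at h2
    simpa using h2

theorem stmt11 (k n : ℕ) (hk : 2 ≤ k) (hn : 0 < n)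
    (E : Finset (Finset (Fin n))) (hunif : ∀ e ∈ E, e.card = k)
    (hconn : HConnected n E) :
    sInf {r : ℝ | ∃ (p : ℕ) (γ : ℕ → Fin n), IsCircuit (tArc k n (qT k n E)) p γ ∧
        r = (∏ j ∈ Finset.range p, (2 * deg n E (γ j) : ℝ)) ^ ((p : ℝ)⁻¹)}
      ≤ specRad k n (qT k n E) ∧
    specRad k n (qT k n E) ≤
      sSup {r : ℝ | ∃ (p : ℕ) (γ : ℕ → Fin n), IsCircuit (tArc k n (qT k n E)) p γ ∧
        r = (∏ j ∈ Finset.range p, (2 * deg n E (γ j) : ℝ)) ^ ((p : ℝ)⁻¹)} := by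
  set S : Set ℝ := {r : ℝ | ∃ (p : ℕ) (γ : ℕ → Fin n), IsCircuit (tArc k n (qT k n E)) p γ ∧
        r = (∏ j ∈ Finset.range p, (2 * deg n E (γ j) : ℝ)) ^ ((p : ℝ)⁻¹)} with hS
  by_cases hE : E = ∅
  · -- degenerate case: no edges (forces n = 1, but we do not need that)
    have hQ0 : ∀ (i : Fin n) (t : Fin (k-1) → Fin n), qT k n E i t = 0 := by
      intro i t
      subst hE
      unfold qT adjT deg
      simp
    have hSempty : S = ∅ := by
      rw [hS]
      ext r
      simp only [Set.mem_setOf_eq, Set.mem_empty_iff_false, iff_false]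
      rintro ⟨p, γ, ⟨hp, -, harc⟩, -⟩
      obtain ⟨t, ht, -⟩ := harc 0 hp
      exact ht (hQ0 _ t)
    have hspec : specRad k n (qT k n E) = 0 := by
      unfold specRad
      have heq : {r : ℝ | ∃ lam, IsEig k n (qT k n E) lam ∧ ‖lam‖ = r} = {0} := by
        ext r
        simp only [Set.mem_setOf_eq, Set.mem_singleton_iff]
        constructor
        · rintro ⟨lam, ⟨x, hx0, hx⟩, rfl⟩
          have hlam : lam = 0 := by
            obtain ⟨i, hi⟩ := Function.ne_iff.mp hx0
            have hi' : x i ≠ 0 := by simpa using hi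
            have h := hx i
            simp only [hQ0, Complex.ofReal_zero, zero_mul, Finset.sum_const, smul_zero] at h
            rcases mul_eq_zero.mp h.symm with h' | h'
            · exact h'
            · exact absurd h' (pow_ne_zero _ hi')
          rw [hlam]; simp
        · rintro rfl
          refine ⟨0, ⟨fun _ => 1, ?_, ?_⟩, by simp⟩
          · intro h
            have := congrFun h ⟨0, hn⟩
            simpa using this
          · intro i
            simp [hQ0]
      rw [heq, csSup_singleton]
    rw [hSempty, hspec, Real.sInf_empty, Real.sSup_empty]
    exact ⟨le_refl 0, le_refl 0⟩
  · -- main case: there is an edge, so all degrees are positive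
    have hdeg : ∀ i, 0 < deg n E i := by
      intro i
      obtain ⟨e, he⟩ := Finset.nonempty_iff_ne_empty.mpr hE
      have hecard := hunif e he
      obtain ⟨v, hv⟩ : e.Nonempty := Finset.card_pos.mp (by omega)
      have hpath := hconn i v
      have hmem : ∃ e' ∈ E, i ∈ e' := by
        rcases Relation.ReflTransGen.cases_head hpath with heq | ⟨b, ⟨e', he', hie', -⟩, -⟩
        · subst heq; exact ⟨e, he, hv⟩
        · exact ⟨e', he', hie'⟩
      obtain ⟨e', he', hie'⟩ := hmem
      rw [deg, Finset.card_pos]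
      exact ⟨e', Finset.mem_filter.mpr ⟨he', hie'⟩⟩
    have hne : Nonempty (Fin n) := ⟨⟨0, hn⟩⟩
    obtain ⟨imax, -, himax⟩ := Finset.exists_max_image Finset.univ (fun i => deg n E i)
      ⟨Classical.arbitrary _, Finset.mem_univ _⟩
    obtain ⟨imin, -, himin⟩ := Finset.exists_min_image Finset.univ (fun i => deg n E i)
      ⟨Classical.arbitrary _, Finset.mem_univ _⟩
    set dM : ℝ := (deg n E imax : ℝ) with hdM
    set dm : ℝ := (deg n E imin : ℝ) with hdm
    have hdMpos : 0 < dM := by rw [hdM]; exact_mod_cast hdeg imax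
    have hdmpos : 0 < dm := by rw [hdm]; exact_mod_cast hdeg imin
    have hslice : ∀ i, sliceSum k n (qT k n E) i = 2 * (deg n E i : ℝ) :=
      qT_sliceSum k n hk E hunif
    -- every element of S lies below 2 * dM
    have hSub : ∀ r ∈ S, r ≤ 2 * dM := by
      rw [hS]
      rintro r ⟨p, γ, ⟨hp, -, -⟩, rfl⟩
      have h1 : (∏ j ∈ Finset.range p, (2 * (deg n E (γ j) : ℝ)))
          ≤ ∏ _j ∈ Finset.range p, (2*dM) := by
        refine Finset.prod_le_prod (fun j _ => by positivity) (fun j _ => ?_)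
        have := himax (γ j) (Finset.mem_univ _)
        rw [hdM]
        have h2 : (deg n E (γ j) : ℝ) ≤ (deg n E imax : ℝ) := by exact_mod_cast this
        linarith
      rw [Finset.prod_const, Finset.card_range] at h1
      calc (∏ j ∈ Finset.range p, (2 * (deg n E (γ j) : ℝ))) ^ ((p:ℝ)⁻¹)
          ≤ ((2*dM)^p) ^ ((p:ℝ)⁻¹) := Real.rpow_le_rpow
            (Finset.prod_nonneg fun j _ => by positivity) h1 (by positivity)
        _ = 2*dM := by
            rw [← Real.rpow_natCast (2*dM) p, ← Real.rpow_mul (by positivity),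
              mul_inv_cancel₀ (Nat.cast_ne_zero.mpr hp.ne'), Real.rpow_one]
    have hSbdd : BddAbove S := ⟨2*dM, fun r hr => hSub r hr⟩
    have hSbelow : BddBelow S := by
      refine ⟨0, ?_⟩
      rw [hS]
      rintro r ⟨p, γ, -, rfl⟩
      exact Real.rpow_nonneg (Finset.prod_nonneg fun j _ => by positivity) _
    -- loop memberships
    have hSmem : ∀ i : Fin n, (2*(deg n E i : ℝ)) ∈ S := by
      intro i
      rw [hS]
      refine ⟨1, fun _ => i, ⟨one_pos, rfl, fun j _ => qT_loop k n hk E i (hdeg i)⟩, ?_⟩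
      rw [Finset.prod_range_one]
      norm_num
    -- upper bound for every eigenvalue
    have hup : ∀ lam : ℂ, IsEig k n (qT k n E) lam → ‖lam‖ ≤ 2*dM := by
      intro lam h
      obtain ⟨i, hi⟩ := eig_abs_le k n hn (qT k n E) (qT_nonneg k n E) lam h
      rw [hslice i] at hi
      refine le_trans hi ?_
      have := himax i (Finset.mem_univ _)
      have h2 : (deg n E i : ℝ) ≤ dM := by rw [hdM]; exact_mod_cast this
      linarith
    have hEigBdd : BddAbove {r : ℝ | ∃ lam : ℂ, IsEig k n (qT k n E) lam ∧ ‖lam‖ = r} := by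
      refine ⟨2*dM, ?_⟩
      rintro r ⟨lam, h, rfl⟩
      exact hup lam h
    -- existence of a large eigenvalue
    obtain ⟨lam, x, hlamge, hx0, hxsum, heig⟩ := exists_eigpair_nonneg k n hk hn (qT k n E)
      (qT_nonneg k n E) (2*dm) (by positivity) (fun i => by
        rw [hslice i]
        have := himin i (Finset.mem_univ _)
        have h2 : dm ≤ (deg n E i : ℝ) := by rw [hdm]; exact_mod_cast this
        linarith)
    have hiseig : IsEig k n (qT k n E) (lam : ℂ) := real_eig k n hn _ lam x hxsum heig
    have hlamnn : 0 ≤ lam := le_trans (by positivity) hlamge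
    have hlam_le_spec : lam ≤ specRad k n (qT k n E) := by
      unfold specRad
      refine le_csSup hEigBdd ⟨(lam : ℂ), hiseig, ?_⟩
      rw [Complex.norm_real, Real.norm_of_nonneg hlamnn]
    constructor
    · calc sInf S ≤ 2*dm := csInf_le hSbelow (by rw [hdm]; exact hSmem imin)
        _ ≤ lam := hlamge
        _ ≤ specRad k n (qT k n E) := hlam_le_spec
    · have h2dM : 2*dM ≤ sSup S := le_csSup hSbdd (by rw [hdM]; exact hSmem imax)
      unfold specRad
      refine Real.sSup_le ?_ (le_trans (by positivity) h2dM)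
      rintro r ⟨lam', h', rfl⟩
      exact le_trans (hup lam' h') h2dM
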